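/- The complete elliptic integral of the first kind satisfies the asymptotic K(1 - m') = (1/2)·ln(16/m') + o(1) as m' → 0+. -/

import Mathlib

open Real MeasureTheory Set

noncomputable def ellipticK (m : ℝ) : ℝ :=
  ∫ θ in (0:ℝ)..(π / 2), 1 / Real.sqrt (1 - m * Real.sin θ ^ 2)

namespace EllAux

noncomputable def g (m w : ℝ) : ℝ := 1 / Real.sqrt ((1 - w^2) * (m + (1-m) * w^2))
noncomputable def B (m w : ℝ) : ℝ := 1 / Real.sqrt (m + w^2)
noncomputable def d (m w : ℝ) : ℝ := g m w - B m w
noncomputable def d0 (w : ℝ) : ℝ := 1/(w * Real.sqrt (1 - w^2)) - 1/w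

lemma cos_image : Real.cos '' Ioo 0 (π/2) = Ioo (0:ℝ) 1 := by
  ext w
  constructor
  · rintro ⟨θ, ⟨h1, h2⟩, rfl⟩
    constructor
    · apply Real.cos_pos_of_mem_Ioo
      constructor <;> nlinarith [Real.pi_pos]
    · have : Real.cos θ < Real.cos 0 := by
        apply Real.cos_lt_cos_of_nonneg_of_le_pi le_rfl (by nlinarith [Real.pi_pos]) h1
      simpa using this
  · rintro ⟨h1, h2⟩
    refine ⟨Real.arccos w, ⟨?_, ?_⟩, Real.cos_arccos (by linarith) (by linarith)⟩
    · exact Real.arccos_pos.2 h2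
    · exact Real.arccos_lt_pi_div_two.2 h1

lemma substitution {m : ℝ} (hm : 0 < m) (hm1 : m < 1) :
    ellipticK (1 - m) = ∫ w in Ioo (0:ℝ) 1, g m w := by
  have himg : ∫ w in Ioo (0:ℝ) 1, g m w
      = ∫ θ in Ioo 0 (π/2), |(-Real.sin θ)| • g m (Real.cos θ) := by
    rw [← cos_image]
    apply integral_image_eq_integral_abs_deriv_smul measurableSet_Ioo
      (fun θ _ => (Real.hasDerivAt_cos θ).hasDerivWithinAt)
    apply Real.injOn_cos.mono
    intro θ hθ
    exact ⟨hθ.1.le, by nlinarith [hθ.2, Real.pi_pos]⟩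
  rw [himg]
  have hpi : (0:ℝ) ≤ π/2 := by positivity
  rw [ellipticK, intervalIntegral.integral_of_le hpi, ← integral_Ioc_eq_integral_Ioo]
  symm
  apply setIntegral_congr_fun measurableSet_Ioc
  intro θ ⟨h1, h2⟩
  have hs : 0 < Real.sin θ := Real.sin_pos_of_pos_of_lt_pi h1 (by nlinarith [Real.pi_pos])
  have hc : Real.sin θ ^ 2 + Real.cos θ ^ 2 = 1 := Real.sin_sq_add_cos_sq θ
  have hX : m + (1-m) * Real.cos θ ^ 2 = 1 - (1-m) * Real.sin θ ^ 2 := by nlinarith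
  have h1c : 1 - Real.cos θ ^ 2 = Real.sin θ ^ 2 := by nlinarith
  simp only [g, smul_eq_mul, abs_neg, abs_of_pos hs, h1c, hX]
  rw [Real.sqrt_mul (by positivity), Real.sqrt_sq hs.le]
  have hXpos : (0:ℝ) < 1 - (1-m) * Real.sin θ ^ 2 := by nlinarith [Real.sin_le_one θ, Real.neg_one_le_sin θ]
  rw [mul_one_div, mul_comm, ← div_div, div_right_comm, div_self hs.ne']


lemma B_cont {m : ℝ} (hm : 0 < m) : Continuous (B m) := by
  apply continuous_const.div
  · fun_prop
  · intro w
    exact (Real.sqrt_pos.2 (by positivity)).ne'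

lemma B_integral {m : ℝ} (hm : 0 < m) :
    ∫ w in Ioo (0:ℝ) 1, B m w = Real.arsinh (1 / Real.sqrt m) := by
  have hsm : 0 < Real.sqrt m := Real.sqrt_pos.2 hm
  have hderiv : ∀ w ∈ uIcc (0:ℝ) 1, HasDerivAt (fun w => Real.arsinh (w / Real.sqrt m)) (B m w) w := by
    intro w _
    have h := (Real.hasDerivAt_arsinh (w / Real.sqrt m)).comp w
      ((hasDerivAt_id w).div_const (Real.sqrt m))
    refine h.congr_deriv (Eq.symm ?_)
    have hkey : Real.sqrt (1 + (w / Real.sqrt m)^2) * Real.sqrt m = Real.sqrt (m + w^2) := by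
      rw [← Real.sqrt_mul (by positivity)]
      congr 1
      rw [div_pow, Real.sq_sqrt hm.le]
      field_simp
    rw [B, ← hkey, one_div, mul_inv, one_div]
  rw [← integral_Ioc_eq_integral_Ioo, ← intervalIntegral.integral_of_le (by norm_num : (0:ℝ) ≤ 1)]
  rw [intervalIntegral.integral_eq_sub_of_hasDerivAt hderiv ((B_cont hm).intervalIntegrable 0 1)]
  simp [Real.arsinh_zero]

lemma d0_deriv : ∀ w ∈ Ioo (0:ℝ) 1,
    HasDerivAt (fun w => -Real.log (1 + Real.sqrt (1 - w^2))) (d0 w) w := by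
  rintro w ⟨hw0, hw1⟩
  have h2 : (0:ℝ) < 1 - w^2 := by nlinarith
  have hu : 0 < Real.sqrt (1 - w^2) := Real.sqrt_pos.2 h2
  have hu2 : Real.sqrt (1 - w^2) ^ 2 = 1 - w^2 := Real.sq_sqrt h2.le
  have hinner : HasDerivAt (fun w : ℝ => 1 - w^2) (-(2*w)) w := by
    simpa using (hasDerivAt_pow 2 w).const_sub 1
  have hsq : HasDerivAt (fun w : ℝ => Real.sqrt (1 - w^2))
      (1 / (2 * Real.sqrt (1 - w^2)) * -(2*w)) w :=
    (Real.hasDerivAt_sqrt h2.ne').comp w hinner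
  have hlog := ((hsq.const_add 1).log (by positivity)).neg
  refine hlog.congr_deriv (Eq.symm ?_)
  rw [d0]
  set u := Real.sqrt (1 - w^2) with hudef
  field_simp
  linear_combination (-1) * hu2

lemma d0_nonneg : ∀ w ∈ Ioo (0:ℝ) 1, 0 ≤ d0 w := by
  rintro w ⟨hw0, hw1⟩
  have h2 : (0:ℝ) < 1 - w^2 := by nlinarith
  have hu : 0 < Real.sqrt (1 - w^2) := Real.sqrt_pos.2 h2
  have hu1 : Real.sqrt (1 - w^2) ≤ 1 := by
    have := Real.sqrt_le_sqrt (show (1:ℝ) - w^2 ≤ 1 by nlinarith)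
    simpa using this
  rw [d0, sub_nonneg]
  apply one_div_le_one_div_of_le (by positivity)
  nlinarith

lemma Fcont : ContinuousOn (fun w : ℝ => -Real.log (1 + Real.sqrt (1 - w^2))) (Icc 0 1) := by
  have h : Continuous fun w : ℝ => 1 + Real.sqrt (1 - w^2) := by fun_prop
  apply (Real.continuousOn_log.comp h.continuousOn ?_).neg
  intro w _
  have : 0 < 1 + Real.sqrt (1 - w^2) := by positivity
  exact Set.mem_setOf.2 this.ne'

lemma d0_integrableOn : IntegrableOn d0 (Ioo (0:ℝ) 1) :=
  (intervalIntegral.integrableOn_deriv_of_nonneg Fcont d0_deriv d0_nonneg).mono_set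
    Ioo_subset_Ioc_self

lemma d0_integral : ∫ w in Ioo (0:ℝ) 1, d0 w = Real.log 2 := by
  rw [← integral_Ioc_eq_integral_Ioo, ← intervalIntegral.integral_of_le (by norm_num : (0:ℝ) ≤ 1)]
  rw [intervalIntegral.integral_eq_sub_of_hasDeriv_right_of_le (by norm_num) Fcont
    (fun w hw => (d0_deriv w hw).hasDerivWithinAt)
    ((intervalIntegrable_iff_integrableOn_Ioc_of_le (by norm_num)).2
      (intervalIntegral.integrableOn_deriv_of_nonneg Fcont d0_deriv d0_nonneg))]
  norm_num

set_option maxHeartbeats 1000000 in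
lemma d_bounds {m w : ℝ} (hm : 0 < m) (hm2 : m ≤ 1/2) (hw0 : 0 < w) (hw1 : w < 1) :
    0 ≤ d m w ∧ d m w ≤ Real.sqrt 2 * d0 w + Real.sqrt 2 := by
  have h1w : (0:ℝ) < 1 - w^2 := by nlinarith
  have hq : (0:ℝ) < m + (1-m) * w^2 := by nlinarith
  have hr : (0:ℝ) < m + w^2 := by positivity
  set S := Real.sqrt (1 - w^2) with hSdef
  set Q := Real.sqrt (m + (1-m) * w^2) with hQdef
  set R := Real.sqrt (m + w^2) with hRdef
  have hS : 0 < S := Real.sqrt_pos.2 h1w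
  have hQ : 0 < Q := Real.sqrt_pos.2 hq
  have hR : 0 < R := Real.sqrt_pos.2 hr
  have hS2 : S^2 = 1 - w^2 := Real.sq_sqrt h1w.le
  have hQ2 : Q^2 = m + (1-m) * w^2 := Real.sq_sqrt hq.le
  have hR2 : R^2 = m + w^2 := Real.sq_sqrt hr.le
  have hS1 : S ≤ 1 := by
    have h := Real.sqrt_le_sqrt (show (1:ℝ) - w^2 ≤ 1 by nlinarith)
    rwa [Real.sqrt_one] at h
  have hQR : Q ≤ R := Real.sqrt_le_sqrt (by nlinarith)
  have hs2 : (0:ℝ) < Real.sqrt 2 := by positivity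
  have hwQ : w ≤ Real.sqrt 2 * Q := by
    have h := Real.sqrt_le_sqrt (show w^2 ≤ 2 * (m + (1-m) * w^2) by nlinarith)
    rwa [Real.sqrt_sq hw0.le, Real.sqrt_mul (by norm_num : (0:ℝ) ≤ 2), ← hQdef] at h
  have hgP : g m w = 1 / (S * Q) := by
    rw [g, Real.sqrt_mul h1w.le, ← hSdef, ← hQdef]
  have hBR : B m w = 1/R := by rw [B, ← hRdef]
  have hd0 : d0 w = (1/w) * (1/S - 1) := by
    rw [d0, ← hSdef]; field_simp
  clear_value S Q R
  have hd : d m w = (1/(S*Q) - 1/Q) + (1/Q - 1/R) := by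
    rw [d, hgP, hBR]; ring
  constructor
  · rw [d, hgP, hBR, sub_nonneg]
    apply one_div_le_one_div_of_le (by positivity)
    nlinarith
  · rw [hd]
    have stepa : 1/(S*Q) - 1/Q ≤ Real.sqrt 2 * d0 w := by
      have he : 1/(S*Q) - 1/Q = (1/Q) * (1/S - 1) := by field_simp
      have hQw : 1/Q ≤ Real.sqrt 2 / w := by
        rw [div_le_div_iff₀ hQ hw0]
        nlinarith
      have hS1' : 0 ≤ 1/S - 1 := by
        have h : 1 ≤ 1/S := by rw [le_div_iff₀ hS]; linarith
        linarith
      rw [he, hd0]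
      calc (1/Q) * (1/S - 1) ≤ (Real.sqrt 2 / w) * (1/S - 1) :=
            mul_le_mul_of_nonneg_right hQw hS1'
        _ = Real.sqrt 2 * ((1/w) * (1/S - 1)) := by ring
    have stepb : 1/Q - 1/R ≤ Real.sqrt 2 := by
      have he : 1/Q - 1/R = (R - Q)/(Q*R) := by field_simp
      rw [he, div_le_iff₀ (by positivity)]
      -- suffices : R - Q ≤ √2 * (Q * R)
      have h1 : (R - Q) * (R + Q) = m * w^2 := by
        have h : R^2 - Q^2 = m * w^2 := by rw [hR2, hQ2]; ring
        linear_combination h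
      have h2 : w * R^2 ≤ Real.sqrt 2 * Q * R^2 :=
        mul_le_mul_of_nonneg_right hwQ (sq_nonneg R)
      have h3 : m * w^2 ≤ w * R^2 := by rw [hR2]; nlinarith
      have h5 : Real.sqrt 2 * Q * R^2 ≤ (Real.sqrt 2 * (Q * R)) * (R + Q) := by
        have he2 : Real.sqrt 2 * Q * R^2 = (Real.sqrt 2 * (Q*R)) * R := by ring
        rw [he2]
        exact mul_le_mul_of_nonneg_left (by linarith) (by positivity)
      have h4 : (R - Q) * (R + Q) ≤ (Real.sqrt 2 * (Q * R)) * (R + Q) := by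
        linarith
      exact le_of_mul_le_mul_right h4 (by positivity)
    linarith

lemma d_contOn {m : ℝ} (hm : 0 < m) (hm1 : m < 1) : ContinuousOn (d m) (Ioo (0:ℝ) 1) := by
  have hB : Continuous (B m) := by
    apply continuous_const.div
    · fun_prop
    · intro w
      exact (Real.sqrt_pos.2 (by positivity)).ne'
  apply ContinuousOn.sub _ hB.continuousOn
  apply ContinuousOn.div continuousOn_const
  · fun_prop
  · rintro w ⟨hw0, hw1⟩
    apply (Real.sqrt_pos.2 _).ne'
    have h1 : (0:ℝ) < m + (1-m) * w^2 := by nlinarith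
    have h2 : (0:ℝ) < 1 - w^2 := by nlinarith
    exact mul_pos h2 h1

lemma d_tendsto {w : ℝ} (hw0 : 0 < w) (hw1 : w < 1) :
    Filter.Tendsto (fun m => d m w) (nhdsWithin 0 (Ioi 0)) (nhds (d0 w)) := by
  have h1w : (0:ℝ) < 1 - w^2 := by nlinarith
  have hca : ContinuousAt (fun m => d m w) 0 := by
    apply ContinuousAt.sub
    · apply ContinuousAt.div continuousAt_const
      · exact (Real.continuous_sqrt.continuousAt).comp (by fun_prop)
      · apply (Real.sqrt_pos.2 _).ne'
        nlinarith [mul_pos h1w (pow_pos hw0 2)]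
    · apply ContinuousAt.div continuousAt_const
      · exact (Real.continuous_sqrt.continuousAt).comp (by fun_prop)
      · apply (Real.sqrt_pos.2 _).ne'
        nlinarith [pow_pos hw0 2]
  have hval : d 0 w = d0 w := by
    rw [d, g, B, d0]
    norm_num
    rw [Real.sqrt_mul h1w.le, Real.sqrt_sq hw0.le, mul_inv]
  rw [← hval]
  exact hca.tendsto.mono_left nhdsWithin_le_nhds


lemma d_integrableOn {m : ℝ} (hm : 0 < m) (hm2 : m ≤ 1/2) : IntegrableOn (d m) (Ioo (0:ℝ) 1) := by
  have hmeas : AEStronglyMeasurable (d m) (volume.restrict (Ioo (0:ℝ) 1)) :=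
    (d_contOn hm (by linarith)).aestronglyMeasurable measurableSet_Ioo
  have hbound : IntegrableOn (fun w => Real.sqrt 2 * d0 w + Real.sqrt 2) (Ioo (0:ℝ) 1) :=
    (d0_integrableOn.const_mul _).add (integrableOn_const measure_Ioo_lt_top.ne)
  apply Integrable.mono hbound hmeas
  rw [ae_restrict_iff' measurableSet_Ioo]
  apply ae_of_all
  rintro w ⟨hw0, hw1⟩
  obtain ⟨h0, h1⟩ := d_bounds hm hm2 hw0 hw1
  rw [Real.norm_eq_abs, Real.norm_eq_abs, abs_of_nonneg h0, abs_of_nonneg (le_trans h0 h1)]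
  exact h1

lemma dct : Filter.Tendsto (fun m => ∫ w in Ioo (0:ℝ) 1, d m w)
    (nhdsWithin 0 (Ioi 0)) (nhds (Real.log 2)) := by
  rw [← d0_integral]
  apply MeasureTheory.tendsto_integral_filter_of_dominated_convergence
    (fun w => Real.sqrt 2 * d0 w + Real.sqrt 2)
  · filter_upwards [Ioo_mem_nhdsGT_of_mem
      (⟨le_refl (0:ℝ), by norm_num⟩ : (0:ℝ) ∈ Ico (0:ℝ) (1/2))] with m hm
    exact (d_contOn hm.1 (by linarith [hm.2])).aestronglyMeasurable measurableSet_Ioo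
  · filter_upwards [Ioo_mem_nhdsGT_of_mem
      (⟨le_refl (0:ℝ), by norm_num⟩ : (0:ℝ) ∈ Ico (0:ℝ) (1/2))] with m hm
    rw [ae_restrict_iff' measurableSet_Ioo]
    apply ae_of_all
    rintro w ⟨hw0, hw1⟩
    obtain ⟨h0, h1⟩ := d_bounds hm.1 hm.2.le hw0 hw1
    rw [Real.norm_eq_abs, abs_of_nonneg h0]
    exact h1
  · exact (d0_integrableOn.const_mul _).add (integrableOn_const measure_Ioo_lt_top.ne)
  · rw [ae_restrict_iff' measurableSet_Ioo]
    apply ae_of_all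
    rintro w ⟨hw0, hw1⟩
    exact d_tendsto hw0 hw1

lemma arsinh_eval {m : ℝ} (hm : 0 < m) :
    Real.arsinh (1/Real.sqrt m) = Real.log (1 + Real.sqrt (1+m)) - (1/2) * Real.log m := by
  have hsm : 0 < Real.sqrt m := Real.sqrt_pos.2 hm
  rw [Real.arsinh]
  have h1 : 1 + (1/Real.sqrt m)^2 = (1+m)/m := by
    rw [div_pow, one_pow, Real.sq_sqrt hm.le]
    field_simp
    ring
  rw [h1, Real.sqrt_div (by linarith) m]
  have h2 : 1/Real.sqrt m + Real.sqrt (1+m)/Real.sqrt m = (1 + Real.sqrt (1+m))/Real.sqrt m := by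
    ring
  rw [h2, Real.log_div (by positivity) hsm.ne', Real.log_sqrt hm.le]
  ring

lemma ell_decomp {m : ℝ} (hm : 0 < m) (hm2 : m < 1/2) :
    ellipticK (1-m) - (1/2) * Real.log (16/m)
      = (∫ w in Ioo (0:ℝ) 1, d m w) + (Real.log (1 + Real.sqrt (1+m)) - Real.log 4) := by
  have hm1 : m < 1 := by linarith
  have hBint : IntegrableOn (B m) (Ioo (0:ℝ) 1) :=
    ((B_cont hm).integrableOn_Icc).mono_set Ioo_subset_Icc_self
  have hint : ∫ w in Ioo (0:ℝ) 1, g m w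
      = (∫ w in Ioo (0:ℝ) 1, d m w) + ∫ w in Ioo (0:ℝ) 1, B m w := by
    rw [show (fun w => g m w) = fun w => d m w + B m w from funext fun w => by rw [d]; ring]
    exact integral_add (d_integrableOn hm hm2.le) hBint
  rw [substitution hm hm1, hint, B_integral hm, arsinh_eval hm,
    Real.log_div (by norm_num) hm.ne',
    show Real.log 16 = 2 * Real.log 4 by
      rw [show (16:ℝ) = 4^2 by norm_num, Real.log_pow]; norm_num]
  ring

end EllAux

/-- `K(1 - m') = (1/2) ln(16/m') + o(1)` as `m' → 0⁺`. -/
theorem ellipticK_asymptotic :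
    Filter.Tendsto (fun m' : ℝ => ellipticK (1 - m') - (1 / 2) * Real.log (16 / m'))
      (nhdsWithin 0 (Set.Ioi 0)) (nhds 0) := by
  have heq : ∀ᶠ m in nhdsWithin (0:ℝ) (Set.Ioi 0),
      (fun m => (∫ w in Set.Ioo (0:ℝ) 1, EllAux.d m w)
        + (Real.log (1 + Real.sqrt (1+m)) - Real.log 4)) m
      = ellipticK (1 - m) - (1/2) * Real.log (16/m) := by
    filter_upwards [Ioo_mem_nhdsGT_of_mem
      (⟨le_refl (0:ℝ), by norm_num⟩ : (0:ℝ) ∈ Set.Ico (0:ℝ) (1/2))] with m hm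
    exact (EllAux.ell_decomp hm.1 hm.2).symm
  apply Filter.Tendsto.congr' heq
  have h2 : Filter.Tendsto (fun m : ℝ => Real.log (1 + Real.sqrt (1+m)) - Real.log 4)
      (nhdsWithin 0 (Set.Ioi 0)) (nhds (Real.log 2 - Real.log 4)) := by
    have hc : ContinuousAt (fun m : ℝ => Real.log (1 + Real.sqrt (1+m)) - Real.log 4) 0 := by
      apply ContinuousAt.sub _ continuousAt_const
      apply ContinuousAt.comp (Real.continuousAt_log (by norm_num))
      fun_prop
    have hval : (fun m : ℝ => Real.log (1 + Real.sqrt (1+m)) - Real.log 4) 0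
        = Real.log 2 - Real.log 4 := by norm_num
    rw [← hval]
    exact hc.tendsto.mono_left nhdsWithin_le_nhds
  have := EllAux.dct.add h2
  have hzero : Real.log 2 + (Real.log 2 - Real.log 4) = 0 := by
    rw [show (4:ℝ) = 2*2 by norm_num, Real.log_mul two_ne_zero two_ne_zero]
    ring
  rwa [hzero] at this
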